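/- arXiv:2204.04729 — 5 statements merged into one kernel-verified Lean document; each statement's English description precedes it below -/
import Mathlib

section
/- If P is an indecomposable (prime) finite poset and Q is a poset on the same ground set with the same comparability graph as P, then Q = P or Q = P^d. -/
def IsModule {α : Type*} (lt : α → α → Prop) (M : Set α) : Prop :=
  ∀ z ∉ M, (∀ m ∈ M, lt z m ∨ lt m z) ∨ (∀ m ∈ M, ¬ lt z m ∧ ¬ lt m z)

/-- A poset (given by its strict order) is indecomposable (prime) if its only
nonempty modules are the whole ground set and the singletons. -/
def IsIndecomposable {α : Type*} (lt : α → α → Prop) : Prop :=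
  ∀ M : Set α, M.Nonempty → IsModule lt M → M = Set.univ ∨ ∃ x, M = {x}

namespace GallaiAux

variable {α : Type*}

/-- Comparability (adjacency) relation of the strict order. -/
def adjP (lt : α → α → Prop) (x y : α) : Prop := lt x y ∨ lt y x

lemma adjP_symm {lt : α → α → Prop} {x y : α} (h : adjP lt x y) : adjP lt y x := h.symm

lemma adjP_irrefl {lt : α → α → Prop} (hirr : ∀ x, ¬ lt x x) (x : α) : ¬ adjP lt x x := by
  rintro (h | h) <;> exact hirr x h

/-- One forcing step between directed comparable pairs. -/
def GStep (lt : α → α → Prop) (p q : α × α) : Prop :=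
  (p.1 = q.1 ∧ adjP lt p.1 p.2 ∧ adjP lt q.1 q.2 ∧ ¬ adjP lt p.2 q.2) ∨
  (p.2 = q.2 ∧ adjP lt p.1 p.2 ∧ adjP lt q.1 q.2 ∧ ¬ adjP lt p.1 q.1)

lemma gstep_symm {lt : α → α → Prop} {p q : α × α} (h : GStep lt p q) : GStep lt q p := by
  rcases h with ⟨h1, h2, h3, h4⟩ | ⟨h1, h2, h3, h4⟩
  · exact Or.inl ⟨h1.symm, h3, h2, fun hh => h4 (adjP_symm hh)⟩
  · exact Or.inr ⟨h1.symm, h3, h2, fun hh => h4 (adjP_symm hh)⟩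

lemma gstep_swap {lt : α → α → Prop} {p q : α × α} (h : GStep lt p q) :
    GStep lt (p.2, p.1) (q.2, q.1) := by
  rcases h with ⟨h1, h2, h3, h4⟩ | ⟨h1, h2, h3, h4⟩
  · exact Or.inr ⟨h1, adjP_symm h2, adjP_symm h3, h4⟩
  · exact Or.inl ⟨h1, adjP_symm h2, adjP_symm h3, h4⟩

/-- Forcing class (directed). -/
def GCls (lt : α → α → Prop) (p q : α × α) : Prop := Relation.EqvGen (GStep lt) p q

lemma gcls_swap {lt : α → α → Prop} {p q : α × α} (h : GCls lt p q) :
    GCls lt (p.2, p.1) (q.2, q.1) := by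
  induction h with
  | rel x y hxy => exact Relation.EqvGen.rel _ _ (gstep_swap hxy)
  | refl x => exact Relation.EqvGen.refl _
  | symm x y h ih => exact Relation.EqvGen.symm _ _ ih
  | trans x y z h1 h2 ih1 ih2 => exact Relation.EqvGen.trans _ _ _ ih1 ih2

/-- Same undirected forcing class. -/
def GSame (lt : α → α → Prop) (p q : α × α) : Prop :=
  GCls lt p q ∨ GCls lt p (q.2, q.1)

lemma gsame_refl {lt : α → α → Prop} (p : α × α) : GSame lt p p :=
  Or.inl (Relation.EqvGen.refl p)

lemma gsame_swap_right {lt : α → α → Prop} {p q : α × α} (h : GSame lt p q) :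
    GSame lt p (q.2, q.1) := by
  rcases h with h | h
  · exact Or.inr h
  · exact Or.inl h

lemma gsame_symm {lt : α → α → Prop} {p q : α × α} (h : GSame lt p q) : GSame lt q p := by
  rcases h with h | h
  · exact Or.inl (Relation.EqvGen.symm _ _ h)
  · exact Or.inr (gcls_swap (Relation.EqvGen.symm _ _ h))

lemma gsame_trans {lt : α → α → Prop} {p q r : α × α}
    (h1 : GSame lt p q) (h2 : GSame lt q r) : GSame lt p r := by
  rcases h1 with h1 | h1 <;> rcases h2 with h2 | h2
  · exact Or.inl (Relation.EqvGen.trans _ _ _ h1 h2)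
  · exact Or.inr (Relation.EqvGen.trans _ _ _ h1 h2)
  · exact Or.inr (Relation.EqvGen.trans _ _ _ h1 (gcls_swap h2))
  · exact Or.inl (Relation.EqvGen.trans _ _ _ h1 (gcls_swap h2))

/-- Vertices linked by an edge of the class of `p`. -/
def GLinked (lt : α → α → Prop) (p : α × α) (u v : α) : Prop :=
  adjP lt u v ∧ GSame lt p (u, v)

lemma glinked_symm {lt : α → α → Prop} {p : α × α} {u v : α} (h : GLinked lt p u v) :
    GLinked lt p v u := ⟨adjP_symm h.1, gsame_swap_right h.2⟩

/-- The vertex component of `p.1` in the graph of edges of the class of `p`. -/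
def GComp (lt : α → α → Prop) (p : α × α) : Set α :=
  {x | Relation.EqvGen (GLinked lt p) p.1 x}

lemma glinked_extend {lt : α → α → Prop} {p : α × α} {u v z : α}
    (h : GLinked lt p u v) (hzu : adjP lt z u) (hzv : ¬ adjP lt z v) :
    GLinked lt p u z := by
  have hstep : GStep lt (u, v) (u, z) :=
    Or.inl ⟨rfl, h.1, adjP_symm hzu, fun hh => hzv (adjP_symm hh)⟩
  refine ⟨adjP_symm hzu, ?_⟩
  rcases h.2 with hc | hc
  · exact Or.inl (Relation.EqvGen.trans _ _ _ hc (Relation.EqvGen.rel _ _ hstep))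
  · exact Or.inr (Relation.EqvGen.trans _ _ _ hc (Relation.EqvGen.rel _ _ (gstep_swap hstep)))

lemma gcomp_key {lt : α → α → Prop} {p : α × α} {z : α} (hz : z ∉ GComp lt p) :
    ∀ u v, Relation.EqvGen (GLinked lt p) u v →
      (u ∈ GComp lt p ↔ v ∈ GComp lt p) ∧
      (u ∈ GComp lt p → (adjP lt z u ↔ adjP lt z v)) := by
  intro u v h
  induction h with
  | rel x y hxy =>
    constructor
    · constructor
      · intro hx; exact Relation.EqvGen.trans _ _ _ hx (Relation.EqvGen.rel _ _ hxy)
      · intro hy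
        exact Relation.EqvGen.trans _ _ _ hy
          (Relation.EqvGen.symm _ _ (Relation.EqvGen.rel _ _ hxy))
    · intro hx
      have hy : y ∈ GComp lt p :=
        Relation.EqvGen.trans _ _ _ hx (Relation.EqvGen.rel _ _ hxy)
      constructor
      · intro hzx
        by_contra hzy
        have : GLinked lt p x z := glinked_extend hxy hzx hzy
        exact hz (Relation.EqvGen.trans _ _ _ hx (Relation.EqvGen.rel _ _ this))
      · intro hzy
        by_contra hzx
        have : GLinked lt p y z := glinked_extend (glinked_symm hxy) hzy hzx
        exact hz (Relation.EqvGen.trans _ _ _ hy (Relation.EqvGen.rel _ _ this))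
  | refl x => exact ⟨Iff.rfl, fun _ => Iff.rfl⟩
  | symm x y h ih =>
    exact ⟨ih.1.symm, fun hy => (ih.2 (ih.1.mpr hy)).symm⟩
  | trans x y w h1 h2 ih1 ih2 =>
    exact ⟨ih1.1.trans ih2.1, fun hx => (ih1.2 hx).trans (ih2.2 (ih1.1.mp hx))⟩

lemma gcomp_module (lt : α → α → Prop) (p : α × α) : IsModule lt (GComp lt p) := by
  intro z hz
  have hmem : p.1 ∈ GComp lt p := Relation.EqvGen.refl _
  by_cases hza : adjP lt z p.1
  · left
    intro m hm
    exact ((gcomp_key hz p.1 m hm).2 hmem).mp hza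
  · right
    intro m hm
    have : ¬ adjP lt z m := fun hh => hza (((gcomp_key hz p.1 m hm).2 hmem).mpr hh)
    exact ⟨fun hh => this (Or.inl hh), fun hh => this (Or.inr hh)⟩

lemma gcomp_incid {lt : α → α → Prop} {p : α × α} (hp : adjP lt p.1 p.2)
    {x : α} (hx : x ∈ GComp lt p) : ∃ y, GLinked lt p x y := by
  have base : ∃ y, GLinked lt p p.1 y := ⟨p.2, hp, gsame_refl p⟩
  have : ∀ u v, Relation.EqvGen (GLinked lt p) u v →
      ((∃ y, GLinked lt p u y) ↔ (∃ y, GLinked lt p v y)) := by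
    intro u v h
    induction h with
    | rel a b hab => exact ⟨fun _ => ⟨a, glinked_symm hab⟩, fun _ => ⟨b, hab⟩⟩
    | refl a => exact Iff.rfl
    | symm a b h ih => exact ih.symm
    | trans a b c h1 h2 ih1 ih2 => exact ih1.trans ih2
  exact (this p.1 x hx).mp base

/-- Any strict order with the same comparability graph respects forcing steps. -/
lemma orient_step {lt lt' : α → α → Prop}
    (hc : ∀ x y, adjP lt x y ↔ adjP lt' x y)
    (htr : ∀ {a b c}, lt' a b → lt' b c → lt' a c)
    {p q : α × α} (h : GStep lt p q) : lt' p.1 p.2 ↔ lt' q.1 q.2 := by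
  rcases h with ⟨h1, h2, h3, h4⟩ | ⟨h1, h2, h3, h4⟩
  · -- p = (a,b), q = (a,d), b,d nonadjacent
    constructor
    · intro hab
      rcases (hc q.1 q.2).mp h3 with h | h
      · exact h
      · exact absurd ((hc p.2 q.2).mpr (Or.inr (htr h (h1 ▸ hab)))) h4
    · intro haq
      rcases (hc p.1 p.2).mp h2 with h | h
      · exact h
      · exact absurd ((hc p.2 q.2).mpr (Or.inl (htr h (h1.symm ▸ haq)))) h4
  · -- p = (a,b), q = (c,b), a,c nonadjacent
    constructor
    · intro hab
      rcases (hc q.1 q.2).mp h3 with h | h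
      · exact h
      · exact absurd ((hc p.1 q.1).mpr (Or.inl (htr (h1 ▸ hab) h))) h4
    · intro hq
      rcases (hc p.1 p.2).mp h2 with h | h
      · exact h
      · exact absurd ((hc p.1 q.1).mpr (Or.inr (htr (h1.symm ▸ hq) h))) h4

/-- Whether two orders agree on a directed pair. -/
def Agrees (lt lt' : α → α → Prop) (p : α × α) : Prop := lt p.1 p.2 ↔ lt' p.1 p.2

lemma agrees_gcls {lt lt' : α → α → Prop}
    (hc : ∀ x y, adjP lt x y ↔ adjP lt' x y)
    (htr : ∀ {a b c}, lt a b → lt b c → lt a c)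
    (htr' : ∀ {a b c}, lt' a b → lt' b c → lt' a c)
    {p q : α × α} (h : GCls lt p q) : Agrees lt lt' p ↔ Agrees lt lt' q := by
  induction h with
  | rel x y hxy =>
    have hh1 : lt x.1 x.2 ↔ lt y.1 y.2 :=
      orient_step (lt := lt) (lt' := lt) (fun _ _ => Iff.rfl) htr hxy
    have hh2 : lt' x.1 x.2 ↔ lt' y.1 y.2 := orient_step hc htr' hxy
    exact iff_congr hh1 hh2
  | refl x => exact Iff.rfl
  | symm x y h ih => exact ih.symm
  | trans x y z h1 h2 ih1 ih2 => exact ih1.trans ih2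

lemma agrees_swap {lt lt' : α → α → Prop}
    (hc : ∀ x y, adjP lt x y ↔ adjP lt' x y)
    (hirr : ∀ x, ¬ lt x x) (hirr' : ∀ x, ¬ lt' x x)
    (htr : ∀ {a b c}, lt a b → lt b c → lt a c)
    (htr' : ∀ {a b c}, lt' a b → lt' b c → lt' a c)
    {p : α × α} (hp : adjP lt p.1 p.2) :
    Agrees lt lt' (p.2, p.1) ↔ Agrees lt lt' p := by
  have hP : lt p.2 p.1 ↔ ¬ lt p.1 p.2 := by
    constructor
    · intro h1 h2; exact hirr p.1 (htr h2 h1)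
    · intro h1; rcases hp with h | h
      · exact absurd h h1
      · exact h
  have hp' : adjP lt' p.1 p.2 := (hc p.1 p.2).mp hp
  have hQ : lt' p.2 p.1 ↔ ¬ lt' p.1 p.2 := by
    constructor
    · intro h1 h2; exact hirr' p.1 (htr' h2 h1)
    · intro h1; rcases hp' with h | h
      · exact absurd h h1
      · exact h
  unfold Agrees
  rw [hP, hQ, not_iff_not]

lemma agrees_gsame {lt lt' : α → α → Prop}
    (hc : ∀ x y, adjP lt x y ↔ adjP lt' x y)
    (hirr : ∀ x, ¬ lt x x) (hirr' : ∀ x, ¬ lt' x x)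
    (htr : ∀ {a b c}, lt a b → lt b c → lt a c)
    (htr' : ∀ {a b c}, lt' a b → lt' b c → lt' a c)
    {p q : α × α} (hq : adjP lt q.1 q.2) (h : GSame lt p q) :
    Agrees lt lt' p ↔ Agrees lt lt' q := by
  rcases h with h | h
  · exact agrees_gcls hc htr htr' h
  · exact (agrees_gcls hc htr htr' h).trans (agrees_swap hc hirr hirr' htr htr' hq)

/-- The Triangle Lemma (after Golumbic/Gallai). -/
lemma triangle_lemma {lt : α → α → Prop} (hirr : ∀ x, ¬ lt x x) {a b c : α}
    (hab : adjP lt a b) (hac : adjP lt a c)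
    (h1 : ¬ GSame lt (b, c) (a, b)) (h2 : ¬ GSame lt (b, c) (a, c)) :
    ∀ q : α × α, GCls lt (b, c) q →
      q.1 ≠ a ∧ q.2 ≠ a ∧ adjP lt a q.1 ∧ adjP lt a q.2 ∧
      GCls lt (a, b) (a, q.1) ∧ GCls lt (a, c) (a, q.2) := by
  set Φ : α × α → Prop := fun q =>
    GCls lt (b, c) q ∧ q.1 ≠ a ∧ q.2 ≠ a ∧ adjP lt a q.1 ∧ adjP lt a q.2 ∧
      GCls lt (a, b) (a, q.1) ∧ GCls lt (a, c) (a, q.2) with hΦ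
  have hstep : ∀ u v : α × α, GStep lt u v → Φ u → Φ v := by
    intro u v hst hu
    obtain ⟨hcls, hu1, hu2, hau1, hau2, hc1, hc2⟩ := hu
    have hclsv : GCls lt (b, c) v :=
      Relation.EqvGen.trans _ _ _ hcls (Relation.EqvGen.rel _ _ hst)
    rcases hst with ⟨he, hadju, hadjv, hn⟩ | ⟨he, hadju, hadjv, hn⟩
    · -- same first coordinate
      have hv1 : v.1 ≠ a := he ▸ hu1
      have hv2 : v.2 ≠ a := by
        intro hh
        exact hn (hh ▸ adjP_symm hau2)
      have hav2 : adjP lt a v.2 := by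
        by_contra hno
        have hstep2 : GStep lt (v.1, v.2) (v.1, a) :=
          Or.inl ⟨rfl, hadjv, adjP_symm (he ▸ hau1), fun hh => hno (adjP_symm hh)⟩
        have hA : GCls lt (b, c) (v.1, a) :=
          Relation.EqvGen.trans _ _ _ hclsv (Relation.EqvGen.rel _ _ hstep2)
        have hB : GCls lt (b, a) (v.1, a) :=
          gcls_swap (he ▸ hc1 : GCls lt (a, b) (a, v.1))
        exact h1 (Or.inr (Relation.EqvGen.trans _ _ _ hA (Relation.EqvGen.symm _ _ hB)))
      have hstep3 : GStep lt (a, u.2) (a, v.2) := Or.inl ⟨rfl, hau2, hav2, hn⟩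
      exact ⟨hclsv, hv1, hv2, he ▸ hau1, hav2, he ▸ hc1,
        Relation.EqvGen.trans _ _ _ hc2 (Relation.EqvGen.rel _ _ hstep3)⟩
    · -- same second coordinate
      have hv2 : v.2 ≠ a := he ▸ hu2
      have hv1 : v.1 ≠ a := by
        intro hh
        exact hn (hh ▸ adjP_symm hau1)
      have hav1 : adjP lt a v.1 := by
        by_contra hno
        have hstep2 : GStep lt (v.1, v.2) (a, v.2) :=
          Or.inr ⟨rfl, hadjv, (he ▸ hau2 : adjP lt a v.2), fun hh => hno (adjP_symm hh)⟩
        have hA : GCls lt (b, c) (a, v.2) :=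
          Relation.EqvGen.trans _ _ _ hclsv (Relation.EqvGen.rel _ _ hstep2)
        have hB : GCls lt (a, c) (a, v.2) := he ▸ hc2
        exact h2 (Or.inl (Relation.EqvGen.trans _ _ _ hA (Relation.EqvGen.symm _ _ hB)))
      have hstep3 : GStep lt (a, u.1) (a, v.1) := Or.inl ⟨rfl, hau1, hav1, hn⟩
      exact ⟨hclsv, hv1, hv2, hav1, he ▸ hau2,
        Relation.EqvGen.trans _ _ _ hc1 (Relation.EqvGen.rel _ _ hstep3), he ▸ hc2⟩
  have hiff : ∀ u v : α × α, Relation.EqvGen (GStep lt) u v → (Φ u ↔ Φ v) := by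
    intro u v h
    induction h with
    | rel x y hxy => exact ⟨hstep _ _ hxy, hstep _ _ (gstep_symm hxy)⟩
    | refl x => exact Iff.rfl
    | symm x y h ih => exact ih.symm
    | trans x y z h1 h2 ih1 ih2 => exact ih1.trans ih2
  intro q hq
  have hbase : Φ (b, c) := by
    refine ⟨Relation.EqvGen.refl _, ?_, ?_, hab, hac,
      Relation.EqvGen.refl _, Relation.EqvGen.refl _⟩
    · intro hh
      exact adjP_irrefl hirr a (hh ▸ hab)
    · intro hh
      exact adjP_irrefl hirr a (hh ▸ hac)
  obtain ⟨_, hq1, hq2, hq3, hq4, hq5, hq6⟩ := (hiff _ _ hq).mp hbase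
  exact ⟨hq1, hq2, hq3, hq4, hq5, hq6⟩

end GallaiAux

theorem stmt_14 {α : Type*} [Fintype α] (ltP ltQ : α → α → Prop)
    (hP : IsStrictOrder α ltP) (hQ : IsStrictOrder α ltQ)
    (hprime : IsIndecomposable ltP)
    (hcomp : ∀ x y, (ltP x y ∨ ltP y x) ↔ (ltQ x y ∨ ltQ y x)) :
    (∀ x y, ltQ x y ↔ ltP x y) ∨ (∀ x y, ltQ x y ↔ ltP y x) := by
  classical
  open GallaiAux in
  have hPir : ∀ x, ¬ ltP x x := fun x => hP.toIrrefl.irrefl x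
  have hQir : ∀ x, ¬ ltQ x x := fun x => hQ.toIrrefl.irrefl x
  have hPtr : ∀ {x y z}, ltP x y → ltP y z → ltP x z :=
    fun hxy hyz => hP.toIsTrans.trans _ _ _ hxy hyz
  have hQtr : ∀ {x y z}, ltQ x y → ltQ y z → ltQ x z :=
    fun hxy hyz => hQ.toIsTrans.trans _ _ _ hxy hyz
  have hPasym : ∀ {x y}, ltP x y → ¬ ltP y x := fun {x y} h1 h2 => hPir x (hPtr h1 h2)
  have hQasym : ∀ {x y}, ltQ x y → ¬ ltQ y x := fun {x y} h1 h2 => hQir x (hQtr h1 h2)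
  have hc : ∀ x y, adjP ltP x y ↔ adjP ltQ x y := hcomp
  by_contra hcon
  push_neg at hcon
  obtain ⟨hne, hnd⟩ := hcon
  obtain ⟨x, y, hxy⟩ := hne
  obtain ⟨u, v, huv⟩ := hnd
  -- produce a disagreeing edge d
  have hD : ∃ p : α × α, adjP ltP p.1 p.2 ∧ ¬ Agrees ltP ltQ p := by
    rcases hxy with ⟨hq, hp⟩ | ⟨hq, hp⟩
    · have hyx : ltP y x := by
        rcases (hc x y).mpr (Or.inl hq) with h | h
        · exact absurd h hp
        · exact h
      refine ⟨(y, x), Or.inl hyx, fun h => ?_⟩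
      exact hQasym hq (h.mp hyx)
    · refine ⟨(x, y), Or.inl hp, fun h => ?_⟩
      exact hq (h.mp hp)
  -- produce an agreeing edge e
  have hE : ∃ p : α × α, adjP ltP p.1 p.2 ∧ Agrees ltP ltQ p := by
    rcases huv with ⟨hq, hp⟩ | ⟨hq, hp⟩
    · have huv' : ltP u v := by
        rcases (hc u v).mpr (Or.inl hq) with h | h
        · exact h
        · exact absurd h hp
      exact ⟨(u, v), Or.inl huv', iff_of_true huv' hq⟩
    · have hq' : ltQ v u := by
        rcases (hc v u).mp (Or.inl hp) with h | h
        · exact h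
        · exact absurd h hq
      exact ⟨(v, u), Or.inl hp, iff_of_true hp hq'⟩
  obtain ⟨d, hdadj, hdneq⟩ := hD
  obtain ⟨e, headj, heeq⟩ := hE
  have hnsame : ¬ GSame ltP d e := fun h =>
    hdneq ((agrees_gsame hc hPir hQir (fun {a b c} => hPtr) (fun {a b c} => hQtr)
      headj h).mpr heeq)
  -- every component of a class is everything
  have hspan : ∀ p : α × α, adjP ltP p.1 p.2 → GComp ltP p = Set.univ := by
    intro p hp
    rcases hprime (GComp ltP p) ⟨p.1, Relation.EqvGen.refl _⟩ (gcomp_module ltP p) with h | ⟨w, hw⟩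
    · exact h
    · exfalso
      have h1 : p.1 ∈ GComp ltP p := Relation.EqvGen.refl _
      have h2 : p.2 ∈ GComp ltP p :=
        Relation.EqvGen.rel _ _ ⟨hp, gsame_refl p⟩
      rw [hw] at h1 h2
      have : p.1 = p.2 := h1.trans h2.symm
      exact adjP_irrefl hPir p.1 (this ▸ hp)
  by_cases hconf : ∃ a b c : α, adjP ltP a b ∧ adjP ltP a c ∧ adjP ltP b c ∧
      ¬ GSame ltP (b, c) (a, b) ∧ ¬ GSame ltP (b, c) (a, c)
  · obtain ⟨a, b, c, hab, hac, hbc, hs1, hs2⟩ := hconf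
    have htri := triangle_lemma hPir hab hac hs1 hs2
    have hM := hspan (b, c) hbc
    have ha : a ∈ GComp ltP (b, c) := by rw [hM]; trivial
    obtain ⟨w, hlw⟩ := gcomp_incid hbc ha
    rcases hlw.2 with hcl | hcl
    · exact (htri (a, w) hcl).1 rfl
    · exact (htri (w, a) hcl).2.1 rfl
  · -- no mixed triangle : all triangles monochromatic
    have hmono : ∀ s w t : α, adjP ltP s w → adjP ltP s t → adjP ltP w t →
        GSame ltP (s, t) (s, w) := by
      intro s w t hsw hst hwt
      by_contra h12
      have hconf' : ∀ a b c : α, adjP ltP a b → adjP ltP a c → adjP ltP b c →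
          GSame ltP (b, c) (a, b) ∨ GSame ltP (b, c) (a, c) := by
        intro a b c h1 h2 h3
        by_contra hno
        push_neg at hno
        exact hconf ⟨a, b, c, h1, h2, h3, hno.1, hno.2⟩
      have k1 := hconf' w s t (adjP_symm hsw) hwt hst
      have h13 : GSame ltP (s, t) (w, t) := by
        rcases k1 with k | k
        · exact absurd (gsame_swap_right k) h12
        · exact k
      have k2 := hconf' t s w (adjP_symm hst) (adjP_symm hwt) hsw
      rcases k2 with k | k
      · exact h12 (gsame_symm (gsame_swap_right k))
      · -- k : GSame (s,w) (t,w)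
        have : GSame ltP (s, t) (s, w) :=
          gsame_trans h13 (gsame_symm (gsame_swap_right k))
        exact h12 this
    have hM := hspan d hdadj
    have he1 : e.1 ∈ GComp ltP d := by rw [hM]; trivial
    obtain ⟨w, hlw⟩ := gcomp_incid hdadj he1
    have hle : GSame ltP d (e.1, e.2) → False := fun h => hnsame h
    by_cases hwe : w = e.2
    · exact hle (hwe ▸ hlw.2)
    · by_cases hadj : adjP ltP w e.2
      · have := hmono e.1 w e.2 hlw.1 headj hadj
        exact hle (gsame_trans hlw.2 (gsame_symm this))
      · have hstep : GStep ltP (e.1, w) (e.1, e.2) := Or.inl ⟨rfl, hlw.1, headj, hadj⟩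
        have : GSame ltP d (e.1, e.2) := by
          rcases hlw.2 with hcl | hcl
          · exact Or.inl (Relation.EqvGen.trans _ _ _ hcl (Relation.EqvGen.rel _ _ hstep))
          · exact Or.inr
              (Relation.EqvGen.trans _ _ _ hcl (Relation.EqvGen.rel _ _ (gstep_swap hstep)))
        exact hle this
end

section
/- Substitution preserves the CI (containment-of-intervals) property: if P is a poset with a containment representation by closed intervals of the real line, v ∈ P, and H is a poset with a containment representation by closed intervals, then the substitution P_{H→v} also admits a containment representation by closed intervals. -/
/-- The strict order relation of the substitution `P_{H→v}`: the element `v` of `P`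
(on type `α`) is replaced by the poset `H` (on type `β`). -/
def subLT {α β : Type*} [PartialOrder α] [PartialOrder β] (v : α) :
    ({a : α // a ≠ v} ⊕ β) → ({a : α // a ≠ v} ⊕ β) → Prop
  | Sum.inl a, Sum.inl b => a.1 < b.1
  | Sum.inl a, Sum.inr _ => a.1 < v
  | Sum.inr _, Sum.inl b => v < b.1
  | Sum.inr a, Sum.inr b => a < b

/-- A containment representation by nondegenerate closed real intervals. -/
def IsCIRel {γ : Type*} (lt : γ → γ → Prop) : Prop :=
  ∃ lo hi : γ → ℝ, (∀ x, lo x < hi x) ∧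
    ∀ x y, lt x y ↔ Set.Icc (lo x) (hi x) ⊂ Set.Icc (lo y) (hi y)

/-- The "blow-up" map: it opens a gap of width `2` just above `A` and just above `B`,
and the secondary coordinate `q` is used to order points inside these gaps. -/
noncomputable def Fm (A B p q : ℝ) : ℝ :=
  if p < A then p else if p = A then A + q
  else if p < B then p + 2 else if p = B then B + 2 + q else p + 4

lemma Fm_A (A B q : ℝ) : Fm A B A q = A + q := by
  unfold Fm
  rw [if_neg (lt_irrefl A), if_pos rfl]

lemma Fm_B {A B : ℝ} (hAB : A < B) (q : ℝ) : Fm A B B q = B + 2 + q := by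
  unfold Fm
  rw [if_neg (not_lt.2 hAB.le), if_neg hAB.ne', if_neg (lt_irrefl B), if_pos rfl]

lemma Fm_strictMono {A B : ℝ} (hAB : A < B) {p p' q q' : ℝ}
    (hq : 0 ≤ q) (hq1 : q ≤ 1) (hq' : 0 ≤ q') (hq1' : q' ≤ 1)
    (h : p < p') : Fm A B p q < Fm A B p' q' := by
  unfold Fm
  split_ifs <;> linarith

lemma Fm_mono_q {A B p q q' : ℝ} (h : q ≤ q') : Fm A B p q ≤ Fm A B p q' := by
  unfold Fm
  split_ifs <;> linarith

lemma Fm_le_p {A B : ℝ} (hAB : A < B) {p p' q q' : ℝ}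
    (hq : 0 ≤ q) (hq1 : q ≤ 1) (hq' : 0 ≤ q') (hq1' : q' ≤ 1)
    (h : Fm A B p q ≤ Fm A B p' q') : p ≤ p' := by
  by_contra hc
  push_neg at hc
  exact absurd h (not_le.2 (Fm_strictMono hAB hq' hq1' hq hq1 hc))

lemma Icc_ssubset_Icc_iff' {a b c d : ℝ} (hab : a < b) (hcd : c < d) :
    Set.Icc a b ⊂ Set.Icc c d ↔ (c ≤ a ∧ b ≤ d) ∧ ¬(a ≤ c ∧ d ≤ b) := by
  rw [ssubset_iff_subset_not_subset, Set.Icc_subset_Icc_iff hab.le,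
    Set.Icc_subset_Icc_iff hcd.le]

theorem stmt_16 {α β : Type*} [PartialOrder α] [PartialOrder β] (v : α)
    (hP : IsCIRel (· < · : α → α → Prop))
    (hH : IsCIRel (· < · : β → β → Prop)) :
    IsCIRel (subLT (β := β) v) := by
  classical
  obtain ⟨lo, hi, hnd, hrep⟩ := hP
  obtain ⟨lo', hi', hnd', hrep'⟩ := hH
  beta_reduce at hrep hrep'
  set A := lo v with hA
  set B := hi v with hB
  have hAB : A < B := hnd v
  -- squashing map for H, with values in (0,1)
  set φ : ℝ → ℝ := fun x => 1/2 + Real.arctan x / Real.pi with hφ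
  have hφ0 : ∀ x, 0 < φ x := by
    intro x
    have h1 := Real.neg_pi_div_two_lt_arctan x
    have h2 : -(1/2 : ℝ) < Real.arctan x / Real.pi := by
      rw [lt_div_iff₀ Real.pi_pos]; nlinarith
    simp only [hφ]; linarith
  have hφ1 : ∀ x, φ x < 1 := by
    intro x
    have h1 := Real.arctan_lt_pi_div_two x
    have h2 : Real.arctan x / Real.pi < 1/2 := by
      rw [div_lt_iff₀ Real.pi_pos]; nlinarith
    simp only [hφ]; linarith
  have hφmono : StrictMono φ := fun x y hxy => by
    have h := (div_lt_div_iff_of_pos_right Real.pi_pos).2 (Real.arctan_strictMono hxy)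
    simpa only [hφ] using add_lt_add_right h (1/2 : ℝ)
  -- the secondary coordinates for the elements of P
  set slo : α → ℝ := fun x => if hi x < B then 1 else 0 with hslo
  set shi : α → ℝ := fun x => if lo x < A then 1 else 0 with hshi
  have slo0 : ∀ x, 0 ≤ slo x := fun x => by simp only [hslo]; split_ifs <;> norm_num
  have slo1 : ∀ x, slo x ≤ 1 := fun x => by simp only [hslo]; split_ifs <;> norm_num
  have shi0 : ∀ x, 0 ≤ shi x := fun x => by simp only [hshi]; split_ifs <;> norm_num
  have shi1 : ∀ x, shi x ≤ 1 := fun x => by simp only [hshi]; split_ifs <;> norm_num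
  -- the representation of the substituted poset
  refine ⟨Sum.elim (fun a => Fm A B (lo a.1) (slo a.1)) (fun b => Fm A B A (φ (lo' b))),
    Sum.elim (fun a => Fm A B (hi a.1) (shi a.1)) (fun b => Fm A B B (φ (hi' b))), ?_, ?_⟩
  case _ =>
    rintro (a | b)
    · exact Fm_strictMono hAB (slo0 a.1) (slo1 a.1) (shi0 a.1) (shi1 a.1) (hnd a.1)
    · simp only [Sum.elim_inr]
      rw [Fm_A, Fm_B hAB]
      have := hφ0 (lo' b); have := hφ1 (lo' b)
      have := hφ0 (hi' b); have := hφ1 (hi' b)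
      linarith
  -- nondegeneracy of the new intervals, as reusable facts
  have ndl : ∀ a : α, Fm A B (lo a) (slo a) < Fm A B (hi a) (shi a) := fun a =>
    Fm_strictMono hAB (slo0 a) (slo1 a) (shi0 a) (shi1 a) (hnd a)
  have ndr : ∀ b : β, Fm A B A (φ (lo' b)) < Fm A B B (φ (hi' b)) := fun b => by
    rw [Fm_A, Fm_B hAB]
    have := hφ0 (lo' b); have := hφ1 (lo' b)
    have := hφ0 (hi' b); have := hφ1 (hi' b)
    linarith
  -- monotonicity of the transformed endpoints under containment of original intervals
  have Llo : ∀ x y : α, lo x ≤ lo y → hi y ≤ hi x →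
      Fm A B (lo x) (slo x) ≤ Fm A B (lo y) (slo y) := by
    intro x y h1 h2
    rcases h1.lt_or_eq with h | h
    · exact (Fm_strictMono hAB (slo0 x) (slo1 x) (slo0 y) (slo1 y) h).le
    · rw [h]
      refine Fm_mono_q ?_
      simp only [hslo]
      split_ifs with u1 u2 <;> try norm_num
      exact absurd (lt_of_le_of_lt h2 u1) u2
  have Lhi : ∀ x y : α, lo x ≤ lo y → hi y ≤ hi x →
      Fm A B (hi y) (shi y) ≤ Fm A B (hi x) (shi x) := by
    intro x y h1 h2
    rcases h2.lt_or_eq with h | h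
    · exact (Fm_strictMono hAB (shi0 y) (shi1 y) (shi0 x) (shi1 x) h).le
    · rw [h]
      refine Fm_mono_q ?_
      simp only [hshi]
      split_ifs with u1 u2 <;> try norm_num
      exact absurd (lt_of_le_of_lt h1 u1) u2
  have Frev : ∀ x y : α, Fm A B (lo x) (slo x) ≤ Fm A B (lo y) (slo y) → lo x ≤ lo y := by
    intro x y h
    exact Fm_le_p hAB (slo0 x) (slo1 x) (slo0 y) (slo1 y) h
  have Frevh : ∀ x y : α, Fm A B (hi x) (shi x) ≤ Fm A B (hi y) (shi y) → hi x ≤ hi y := by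
    intro x y h
    exact Fm_le_p hAB (shi0 x) (shi1 x) (shi0 y) (shi1 y) h
  rintro (a | b) (c | b')
  -- case inl/inl
  · show a.1 < c.1 ↔ _
    rw [hrep, Icc_ssubset_Icc_iff' (hnd a.1) (hnd c.1)]
    simp only [Sum.elim_inl]
    rw [Icc_ssubset_Icc_iff' (ndl a.1) (ndl c.1)]
    constructor
    · rintro ⟨⟨h1, h2⟩, h3⟩
      refine ⟨⟨Llo c.1 a.1 h1 h2, Lhi c.1 a.1 h1 h2⟩, ?_⟩
      rintro ⟨g1, g2⟩
      exact h3 ⟨Frev a.1 c.1 g1, Frevh c.1 a.1 g2⟩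
    · rintro ⟨⟨g1, g2⟩, g3⟩
      refine ⟨⟨Frev c.1 a.1 g1, Frevh a.1 c.1 g2⟩, ?_⟩
      rintro ⟨k1, k2⟩
      exact g3 ⟨Llo a.1 c.1 k1 k2, Lhi a.1 c.1 k1 k2⟩
  -- case inl/inr
  · show a.1 < v ↔ _
    rw [hrep, ← hA, ← hB, Icc_ssubset_Icc_iff' (hnd a.1) hAB]
    simp only [Sum.elim_inl, Sum.elim_inr]
    rw [Icc_ssubset_Icc_iff' (ndl a.1) (ndr b')]
    have hl0 := hφ0 (lo' b'); have hl1 := hφ1 (lo' b')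
    have hh0 := hφ0 (hi' b'); have hh1 := hφ1 (hi' b')
    constructor
    · rintro ⟨⟨h1, h2⟩, h3⟩
      have hp : A < lo a.1 ∨ hi a.1 < B := by
        by_contra hc
        push_neg at hc
        exact h3 ⟨hc.1, hc.2⟩
      refine ⟨⟨?_, ?_⟩, ?_⟩
      · rcases h1.lt_or_eq with h | h
        · exact (Fm_strictMono hAB (hφ0 _).le (hφ1 _).le (slo0 a.1) (slo1 a.1) h).le
        · rw [← h, Fm_A]
          have hb : hi a.1 < B := by
            rcases hp with hp | hp
            · exact absurd h hp.ne
            · exact hp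
          have : slo a.1 = 1 := by simp only [hslo, if_pos hb]
          rw [Fm_A, this]
          linarith
      · rcases h2.lt_or_eq with h | h
        · exact (Fm_strictMono hAB (shi0 a.1) (shi1 a.1) (hφ0 _).le (hφ1 _).le h).le
        · have ha : A < lo a.1 := by
            rcases hp with hp | hp
            · exact hp
            · exact absurd h hp.ne
          have : shi a.1 = 0 := by simp only [hshi, if_neg (not_lt.2 ha.le)]
          rw [h, this, Fm_B hAB, Fm_B hAB]
          linarith
      · rintro ⟨k1, k2⟩
        rcases hp with hp | hp
        · exact absurd k1 (not_le.2 (Fm_strictMono hAB (hφ0 _).le (hφ1 _).le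
            (slo0 a.1) (slo1 a.1) hp))
        · exact absurd k2 (not_le.2 (Fm_strictMono hAB (shi0 a.1) (shi1 a.1)
            (hφ0 _).le (hφ1 _).le hp))
    · rintro ⟨⟨g1, g2⟩, _⟩
      have h1 : A ≤ lo a.1 := Fm_le_p hAB (hφ0 _).le (hφ1 _).le (slo0 a.1) (slo1 a.1) g1
      have h2 : hi a.1 ≤ B := Fm_le_p hAB (shi0 a.1) (shi1 a.1) (hφ0 _).le (hφ1 _).le g2
      refine ⟨⟨h1, h2⟩, ?_⟩
      rintro ⟨k1, k2⟩
      have e1 : lo a.1 = A := le_antisymm k1 h1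
      have e2 : hi a.1 = B := le_antisymm h2 k2
      have : slo a.1 = 0 := by simp only [hslo, e2, if_neg (lt_irrefl B)]
      rw [e1, this, Fm_A, Fm_A] at g1
      linarith
  -- case inr/inl
  · show v < c.1 ↔ _
    rw [hrep, ← hA, ← hB, Icc_ssubset_Icc_iff' hAB (hnd c.1)]
    simp only [Sum.elim_inl, Sum.elim_inr]
    rw [Icc_ssubset_Icc_iff' (ndr b) (ndl c.1)]
    have hl0 := hφ0 (lo' b); have hl1 := hφ1 (lo' b)
    have hh0 := hφ0 (hi' b); have hh1 := hφ1 (hi' b)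
    constructor
    · rintro ⟨⟨h1, h2⟩, h3⟩
      have hp : lo c.1 < A ∨ B < hi c.1 := by
        by_contra hc
        push_neg at hc
        exact h3 ⟨hc.1, hc.2⟩
      refine ⟨⟨?_, ?_⟩, ?_⟩
      · rcases h1.lt_or_eq with h | h
        · exact (Fm_strictMono hAB (slo0 c.1) (slo1 c.1) (hφ0 _).le (hφ1 _).le h).le
        · have hb : B < hi c.1 := by
            rcases hp with hp | hp
            · exact absurd h hp.ne
            · exact hp
          have : slo c.1 = 0 := by simp only [hslo, if_neg (not_lt.2 hb.le)]
          rw [h, this, Fm_A, Fm_A]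
          linarith
      · rcases h2.lt_or_eq with h | h
        · exact (Fm_strictMono hAB (hφ0 _).le (hφ1 _).le (shi0 c.1) (shi1 c.1) h).le
        · have ha : lo c.1 < A := by
            rcases hp with hp | hp
            · exact hp
            · exact absurd h.symm hp.ne'
          have : shi c.1 = 1 := by simp only [hshi, if_pos ha]
          rw [← h, Fm_B hAB, this, Fm_B hAB]
          linarith
      · rintro ⟨k1, k2⟩
        rcases hp with hp | hp
        · exact absurd k1 (not_le.2 (Fm_strictMono hAB (slo0 c.1) (slo1 c.1)
            (hφ0 _).le (hφ1 _).le hp))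
        · exact absurd k2 (not_le.2 (Fm_strictMono hAB (hφ0 _).le (hφ1 _).le
            (shi0 c.1) (shi1 c.1) hp))
    · rintro ⟨⟨g1, g2⟩, _⟩
      have h1 : lo c.1 ≤ A := Fm_le_p hAB (slo0 c.1) (slo1 c.1) (hφ0 _).le (hφ1 _).le g1
      have h2 : B ≤ hi c.1 := Fm_le_p hAB (hφ0 _).le (hφ1 _).le (shi0 c.1) (shi1 c.1) g2
      refine ⟨⟨h1, h2⟩, ?_⟩
      rintro ⟨k1, k2⟩
      have e1 : lo c.1 = A := le_antisymm h1 k1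
      have e2 : hi c.1 = B := le_antisymm k2 h2
      have : shi c.1 = 0 := by simp only [hshi, e1, if_neg (lt_irrefl A)]
      rw [e2, this, Fm_B hAB, Fm_B hAB] at g2
      linarith
  -- case inr/inr
  · show b < b' ↔ _
    rw [hrep', Icc_ssubset_Icc_iff' (hnd' b) (hnd' b')]
    simp only [Sum.elim_inr]
    rw [Icc_ssubset_Icc_iff' (ndr b) (ndr b'), Fm_A, Fm_A, Fm_B hAB, Fm_B hAB]
    have key : ∀ x y : ℝ, φ x ≤ φ y ↔ x ≤ y := fun x y => hφmono.le_iff_le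
    constructor
    · rintro ⟨⟨h1, h2⟩, h3⟩
      refine ⟨⟨?_, ?_⟩, ?_⟩
      · have := (key _ _).2 h1; linarith
      · have := (key _ _).2 h2; linarith
      · rintro ⟨k1, k2⟩
        exact h3 ⟨(key _ _).1 (by linarith), (key _ _).1 (by linarith)⟩
    · rintro ⟨⟨h1, h2⟩, h3⟩
      refine ⟨⟨(key _ _).1 (by linarith), (key _ _).1 (by linarith)⟩, ?_⟩
      rintro ⟨k1, k2⟩
      exact h3 ⟨by have := (key _ _).2 k1; linarith, by have := (key _ _).2 k2; linarith⟩
end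

section
/- Every finite CI poset admits a CI representation in which the intersection of all intervals is a nondegenerate interval, no interval is a single point, and no two intervals share an endpoint. -/
/-- A containment representation by closed real intervals (possibly degenerate). -/
def HasCIRep {γ : Type*} (lt : γ → γ → Prop) : Prop :=
  ∃ lo hi : γ → ℝ, (∀ x, lo x ≤ hi x) ∧
    ∀ x y, lt x y ↔ Set.Icc (lo x) (hi x) ⊂ Set.Icc (lo y) (hi y)

lemma exists_pos_mul_lt_ci {ι : Type*} (s : Finset ι) (a b : ι → ℝ)
    (ha : ∀ i ∈ s, 0 < a i) : ∃ ε > 0, ∀ i ∈ s, ε * b i < a i := by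
  classical
  set T : Finset ℝ := insert 1 (s.image fun i => a i / (|b i| + 1)) with hT
  have hTne : T.Nonempty := ⟨1, by simp [hT]⟩
  have hTpos : ∀ t ∈ T, 0 < t := by
    intro t ht
    rw [hT, Finset.mem_insert] at ht
    rcases ht with rfl | ht
    · norm_num
    · obtain ⟨i, hi, rfl⟩ := Finset.mem_image.1 ht
      exact div_pos (ha i hi) (by positivity)
  have hεpos : 0 < T.min' hTne := hTpos _ (T.min'_mem hTne)
  refine ⟨T.min' hTne, hεpos, ?_⟩
  intro i hi
  have hmin : T.min' hTne ≤ a i / (|b i| + 1) := by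
    apply Finset.min'_le
    rw [hT, Finset.mem_insert]
    exact Or.inr (Finset.mem_image.2 ⟨i, hi, rfl⟩)
  have hb1 : (0:ℝ) < |b i| + 1 := by positivity
  have hai := ha i hi
  calc T.min' hTne * b i ≤ T.min' hTne * |b i| :=
        mul_le_mul_of_nonneg_left (le_abs_self _) hεpos.le
    _ < T.min' hTne * (|b i| + 1) := by nlinarith
    _ ≤ (a i / (|b i| + 1)) * (|b i| + 1) := mul_le_mul_of_nonneg_right hmin hb1.le
    _ = a i := div_mul_cancel₀ _ hb1.ne'

lemma mul_lt_of_pos_le {ε ε' a b : ℝ} (hε' : 0 < ε') (hle : ε' ≤ ε) (ha : 0 < a)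
    (h : ε * b < a) : ε' * b < a := by
  rcases le_or_gt b 0 with hb | hb
  · nlinarith
  · nlinarith

lemma aux_rep {α : Type*} [PartialOrder α] [Fintype α] (u v : α → ℝ)
    (hchar : ∀ x y : α, x < y ↔ ((u x ≤ u y ∧ v x ≤ v y) ∧ (u x < u y ∨ v x < v y))) :
    ∃ U V : α → ℝ, Function.Injective U ∧ Function.Injective V ∧
      ∀ x y : α, x < y ↔ (U x < U y ∧ V x < V y) := by
  classical
  -- an injective real-valued labelling
  set e : α → ℝ := fun x => ((Fintype.equivFin α x : ℕ) : ℝ) with he_def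
  have he : Function.Injective e := by
    intro a b h
    exact (Fintype.equivFin α).injective (Fin.val_injective (Nat.cast_injective h))
  -- choose ε
  obtain ⟨ε₁, hε₁pos, hε₁⟩ := exists_pos_mul_lt_ci
      (Finset.univ.filter fun p : α × α => u p.1 < u p.2)
      (fun p => u p.2 - u p.1) (fun p => v p.1 - v p.2)
      (by intro p hp; simp only [Finset.mem_filter] at hp; linarith [hp.2])
  obtain ⟨ε₂, hε₂pos, hε₂⟩ := exists_pos_mul_lt_ci
      (Finset.univ.filter fun p : α × α => v p.1 < v p.2)
      (fun p => v p.2 - v p.1) (fun p => u p.1 - u p.2)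
      (by intro p hp; simp only [Finset.mem_filter] at hp; linarith [hp.2])
  set ε := min ε₁ ε₂ with hε_def
  have hεpos : 0 < ε := lt_min hε₁pos hε₂pos
  have hA : ∀ x y : α, u x < u y → u x + ε * v x < u y + ε * v y := by
    intro x y h
    have h1 : ε₁ * (v x - v y) < u y - u x :=
      hε₁ (x, y) (by simp [Finset.mem_filter, h])
    have h2 : ε * (v x - v y) < u y - u x :=
      mul_lt_of_pos_le hεpos (min_le_left _ _) (by linarith) h1
    nlinarith [h2]
  have hB : ∀ x y : α, v x < v y → v x + ε * u x < v y + ε * u y := by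
    intro x y h
    have h1 : ε₂ * (u x - u y) < v y - v x :=
      hε₂ (x, y) (by simp [Finset.mem_filter, h])
    have h2 : ε * (u x - u y) < v y - v x :=
      mul_lt_of_pos_le hεpos (min_le_right _ _) (by linarith) h1
    nlinarith [h2]
  set A : α → ℝ := fun x => u x + ε * v x with hA_def
  set B : α → ℝ := fun x => v x + ε * u x with hB_def
  -- choose δ
  obtain ⟨δ₁, hδ₁pos, hδ₁⟩ := exists_pos_mul_lt_ci
      (Finset.univ.filter fun p : α × α => A p.1 < A p.2)
      (fun p => A p.2 - A p.1) (fun p => e p.1 - e p.2)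
      (by intro p hp; simp only [Finset.mem_filter] at hp; linarith [hp.2])
  obtain ⟨δ₂, hδ₂pos, hδ₂⟩ := exists_pos_mul_lt_ci
      (Finset.univ.filter fun p : α × α => B p.1 < B p.2)
      (fun p => B p.2 - B p.1) (fun p => e p.2 - e p.1)
      (by intro p hp; simp only [Finset.mem_filter] at hp; linarith [hp.2])
  set δ := min δ₁ δ₂ with hδ_def
  have hδpos : 0 < δ := lt_min hδ₁pos hδ₂pos
  set U : α → ℝ := fun x => A x + δ * e x with hU_def
  set V : α → ℝ := fun x => B x - δ * e x with hV_def
  have hUA : ∀ x y : α, A x < A y → U x < U y := by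
    intro x y h
    have h1 : δ₁ * (e x - e y) < A y - A x :=
      hδ₁ (x, y) (by simp [Finset.mem_filter, h])
    have h2 : δ * (e x - e y) < A y - A x :=
      mul_lt_of_pos_le hδpos (min_le_left _ _) (by linarith) h1
    show A x + δ * e x < A y + δ * e y
    nlinarith [h2]
  have hVB : ∀ x y : α, B x < B y → V x < V y := by
    intro x y h
    have h1 : δ₂ * (e y - e x) < B y - B x :=
      hδ₂ (x, y) (by simp [Finset.mem_filter, h])
    have h2 : δ * (e y - e x) < B y - B x :=
      mul_lt_of_pos_le hδpos (min_le_right _ _) (by linarith) h1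
    show B x - δ * e x < B y - δ * e y
    nlinarith [h2]
  -- x < y implies both A and B strict
  have hstrict : ∀ x y : α, x < y → A x < A y ∧ B x < B y := by
    intro x y hxy
    obtain ⟨⟨h1, h2⟩, h3⟩ := (hchar x y).1 hxy
    constructor
    · rcases h1.lt_or_eq with h | h
      · exact hA x y h
      · have hv : v x < v y := h3.resolve_left (by rw [h]; exact lt_irrefl _)
        have := mul_lt_mul_of_pos_left hv hεpos
        show u x + ε * v x < u y + ε * v y
        linarith [h.le, h.ge]
    · rcases h2.lt_or_eq with h | h
      · exact hB x y h
      · have hu : u x < u y := h3.resolve_right (by rw [h]; exact lt_irrefl _)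
        have := mul_lt_mul_of_pos_left hu hεpos
        show v x + ε * u x < v y + ε * u y
        linarith [h.le, h.ge]
  have hUVlt : ∀ x y : α, x < y → U x < U y ∧ V x < V y :=
    fun x y h => ⟨hUA _ _ (hstrict x y h).1, hVB _ _ (hstrict x y h).2⟩
  -- classification of incomparable pairs
  have hclass : ∀ x y : α, ¬ x < y → ¬ y < x →
      (u x = u y ∧ v x = v y) ∨ (u x < u y ∧ v y < v x) ∨ (u y < u x ∧ v x < v y) := by
    intro x y nxy nyx
    rw [hchar] at nxy nyx
    rcases lt_trichotomy (u x) (u y) with h | h | h <;>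
      rcases lt_trichotomy (v x) (v y) with h' | h' | h'
    · exact absurd ⟨⟨h.le, h'.le⟩, Or.inl h⟩ nxy
    · exact absurd ⟨⟨h.le, h'.le⟩, Or.inl h⟩ nxy
    · exact Or.inr (Or.inl ⟨h, h'⟩)
    · exact absurd ⟨⟨h.le, h'.le⟩, Or.inr h'⟩ nxy
    · exact Or.inl ⟨h, h'⟩
    · exact absurd ⟨⟨h.ge, h'.le⟩, Or.inr h'⟩ nyx
    · exact Or.inr (Or.inr ⟨h, h'⟩)
    · exact absurd ⟨⟨h.le, h'.ge⟩, Or.inl h⟩ nyx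
    · exact absurd ⟨⟨h.le, h'.le⟩, Or.inl h⟩ nyx
  -- the main equivalence
  have hmain : ∀ x y : α, x < y ↔ (U x < U y ∧ V x < V y) := by
    intro x y
    refine ⟨fun h => hUVlt x y h, fun h => ?_⟩
    obtain ⟨h1, h2⟩ := h
    by_contra hxy
    by_cases hyx : y < x
    · linarith only [(hUVlt y x hyx).1, h1]
    rcases hclass x y hxy hyx with ⟨ha, hb⟩ | ⟨ha, hb⟩ | ⟨ha, hb⟩
    · have hAeq : A x = A y := by show u x + ε * v x = u y + ε * v y; rw [ha, hb]
      have hBeq : B x = B y := by show v x + ε * u x = v y + ε * u y; rw [ha, hb]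
      have hUxy : A x + δ * e x < A y + δ * e y := h1
      have hVxy : B x - δ * e x < B y - δ * e y := h2
      rw [hAeq] at hUxy
      rw [hBeq] at hVxy
      linarith only [hUxy, hVxy]
    · linarith only [hVB y x (hB y x hb), h2]
    · linarith only [hUA y x (hA y x ha), h1]
  -- injectivity of U
  have hUinj : Function.Injective U := by
    intro x y hxy
    by_contra hne
    by_cases h1 : x < y
    · exact absurd hxy ((hUVlt x y h1).1.ne)
    by_cases h2 : y < x
    · exact absurd hxy ((hUVlt y x h2).1.ne')
    rcases hclass x y h1 h2 with ⟨ha, hb⟩ | ⟨ha, hb⟩ | ⟨ha, hb⟩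
    · have hAeq : A x = A y := by show u x + ε * v x = u y + ε * v y; rw [ha, hb]
      have hU' : A x + δ * e x = A y + δ * e y := hxy
      have : δ * e x = δ * e y := by linarith only [hU', hAeq]
      exact hne (he (mul_left_cancel₀ hδpos.ne' this))
    · exact absurd hxy ((hUA x y (hA x y ha)).ne)
    · exact absurd hxy ((hUA y x (hA y x ha)).ne')
  -- injectivity of V
  have hVinj : Function.Injective V := by
    intro x y hxy
    by_contra hne
    by_cases h1 : x < y
    · exact absurd hxy ((hUVlt x y h1).2.ne)
    by_cases h2 : y < x
    · exact absurd hxy ((hUVlt y x h2).2.ne')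
    rcases hclass x y h1 h2 with ⟨ha, hb⟩ | ⟨ha, hb⟩ | ⟨ha, hb⟩
    · have hBeq : B x = B y := by show v x + ε * u x = v y + ε * u y; rw [ha, hb]
      have hV' : B x - δ * e x = B y - δ * e y := hxy
      have : δ * e x = δ * e y := by linarith only [hV', hBeq]
      exact hne (he (mul_left_cancel₀ hδpos.ne' this))
    · exact absurd hxy ((hVB y x (hB y x hb)).ne')
    · exact absurd hxy ((hVB x y (hB x y hb)).ne)
  exact ⟨U, V, hUinj, hVinj, hmain⟩

theorem stmt_17 {α : Type*} [PartialOrder α] [Fintype α]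
    (hCI : HasCIRep (· < · : α → α → Prop)) :
    ∃ lo hi : α → ℝ,
      (∀ x, lo x < hi x) ∧
      (∀ x y, x < y ↔ Set.Icc (lo x) (hi x) ⊂ Set.Icc (lo y) (hi y)) ∧
      (∃ c d : ℝ, c < d ∧ ∀ x, Set.Icc c d ⊆ Set.Icc (lo x) (hi x)) ∧
      (∀ x y, x ≠ y →
        lo x ≠ lo y ∧ lo x ≠ hi y ∧ hi x ≠ lo y ∧ hi x ≠ hi y) := by
  obtain ⟨lo, hi, hle, hiff⟩ := hCI
  have hchar : ∀ x y : α, x < y ↔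
      (((-lo x) ≤ (-lo y) ∧ hi x ≤ hi y) ∧ ((-lo x) < (-lo y) ∨ hi x < hi y)) := by
    intro x y
    have h0 : x < y ↔ Set.Icc (lo x) (hi x) ⊂ Set.Icc (lo y) (hi y) := hiff x y
    rw [h0, ssubset_iff_subset_not_subset, Set.Icc_subset_Icc_iff (hle x),
      Set.Icc_subset_Icc_iff (hle y)]
    constructor
    · rintro ⟨⟨h1, h2⟩, h3⟩
      push_neg at h3
      refine ⟨⟨by linarith, h2⟩, ?_⟩
      rcases lt_or_ge (lo y) (lo x) with h | h
      · exact Or.inl (by linarith)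
      · exact Or.inr (h3 h)
    · rintro ⟨⟨h1, h2⟩, h3⟩
      refine ⟨⟨by linarith, h2⟩, ?_⟩
      rintro ⟨h4, h5⟩
      rcases h3 with h | h <;> linarith
  obtain ⟨U, V, hUinj, hVinj, hUV⟩ := aux_rep (fun x => -lo x) hi hchar
  refine ⟨fun x => -Real.exp (U x), fun x => 1 + Real.exp (V x), ?_, ?_, ?_, ?_⟩
  · intro x
    show -Real.exp (U x) < 1 + Real.exp (V x)
    have := Real.exp_pos (U x); have := Real.exp_pos (V x); linarith
  · intro x y
    show x < y ↔ Set.Icc (-Real.exp (U x)) (1 + Real.exp (V x)) ⊂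
      Set.Icc (-Real.exp (U y)) (1 + Real.exp (V y))
    have hlo : ∀ z : α, -Real.exp (U z) ≤ 1 + Real.exp (V z) := by
      intro z
      have := Real.exp_pos (U z); have := Real.exp_pos (V z); linarith
    rw [Set.ssubset_def, Set.Icc_subset_Icc_iff (hlo x),
      Set.Icc_subset_Icc_iff (hlo y)]
    constructor
    · intro h
      obtain ⟨h1, h2⟩ := (hUV x y).1 h
      have e1 : Real.exp (U x) < Real.exp (U y) := Real.exp_lt_exp.2 h1
      have e2 : Real.exp (V x) < Real.exp (V y) := Real.exp_lt_exp.2 h2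
      exact ⟨⟨by linarith, by linarith⟩, fun h' => by linarith [h'.1, h'.2]⟩
    · rintro ⟨⟨h1, h2⟩, h3⟩
      have e1 : U x ≤ U y := Real.exp_le_exp.1 (by linarith)
      have e2 : V x ≤ V y := Real.exp_le_exp.1 (by linarith)
      rcases e1.lt_or_eq with h | h
      · rcases e2.lt_or_eq with h' | h'
        · exact (hUV x y).2 ⟨h, h'⟩
        · have := hVinj h'
          subst this
          exact absurd h (lt_irrefl _)
      · have := hUinj h
        subst this
        exact absurd ⟨le_refl _, le_refl _⟩ h3
  · refine ⟨0, 1, one_pos, fun x => ?_⟩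
    show Set.Icc (0:ℝ) 1 ⊆ Set.Icc (-Real.exp (U x)) (1 + Real.exp (V x))
    refine Set.Icc_subset_Icc ?_ ?_
    · linarith [Real.exp_pos (U x)]
    · linarith [Real.exp_pos (V x)]
  · intro x y hne
    refine ⟨?_, ?_, ?_, ?_⟩ <;>
      simp only []
    · intro h
      exact hne (hUinj (Real.exp_eq_exp.1 (by linarith)))
    · intro h
      have := Real.exp_pos (U x); have := Real.exp_pos (V y); linarith
    · intro h
      have := Real.exp_pos (V x); have := Real.exp_pos (U y); linarith
    · intro h
      exact hne (hVinj (Real.exp_eq_exp.1 (by linarith)))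
end

section
/- Let P = (X, ≤) be a poset with a CPT representation and let z ∈ X. Then the principal down-set D[z] = {x : x ≤ z}, with the induced order, is a CI poset (has a containment representation by subpaths of a path). -/
/-- `S` is the vertex set of a path in the graph `T`. -/
def IsVertexPath {V : Type*} (T : SimpleGraph V) (S : Set V) : Prop :=
  ∃ (u v : V) (p : T.Walk u v), p.IsPath ∧ S = {x | x ∈ p.support}

section Aux

variable {V : Type*} [DecidableEq V] {T : SimpleGraph V}

omit [DecidableEq V] in
lemma aux_support_concat {u v : V} (w : T.Walk u v) : ∃ l, w.support = l ++ [v] :=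
  ⟨w.support.dropLast, by
    conv_lhs => rw [← List.dropLast_append_getLast (w.support_ne_nil)]
    simp⟩

lemma aux_take_prefix {u v c : V} (p : T.Walk u v) (hc : c ∈ p.support) :
    (p.takeUntil c hc).support <+: p.support :=
  ⟨(p.dropUntil c hc).support.tail, by
    rw [← SimpleGraph.Walk.support_append, SimpleGraph.Walk.take_spec]⟩

lemma aux_seg_infix {u v c d : V} (p : T.Walk u v) (hc : c ∈ p.support)
    (hd : d ∈ (p.dropUntil c hc).support) :
    ((p.dropUntil c hc).takeUntil d hd).support <:+: p.support := by
  set q := p.dropUntil c hc with hq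
  set s := q.takeUntil d hd with hs
  obtain ⟨A, hA⟩ := aux_support_concat (p.takeUntil c hc)
  have h2 : q.support = s.support ++ (q.dropUntil d hd).support.tail := by
    rw [← SimpleGraph.Walk.support_append, SimpleGraph.Walk.take_spec]
  have h1 : p.support = (p.takeUntil c hc).support ++ q.support.tail := by
    rw [← SimpleGraph.Walk.support_append, SimpleGraph.Walk.take_spec]
  have hshead : s.support = c :: s.support.tail := s.support_eq_cons
  have hqhead : q.support = c :: q.support.tail := q.support_eq_cons
  have htail : q.support.tail = s.support.tail ++ (q.dropUntil d hd).support.tail := by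
    have h3 := h2
    rw [hqhead] at h3
    conv_rhs at h3 => rw [hshead]
    simpa only [List.cons_append, List.cons.injEq, true_and] using h3
  refine ⟨A, (q.dropUntil d hd).support.tail, ?_⟩
  rw [h1, hA, htail]
  conv_lhs => rw [hshead]
  simp only [List.append_assoc, List.cons_append, List.singleton_append, List.nil_append]

lemma aux_seg {u v a b : V} (hT : T.IsTree) (p : T.Walk u v) (hp : p.IsPath)
    (ha : a ∈ p.support) (hb : b ∈ p.support) (q : T.Walk a b) (hq : q.IsPath) :
    ∃ l : List V, l <:+: p.support ∧ ∀ x, x ∈ q.support ↔ x ∈ l := by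
  by_cases hb' : b ∈ (p.dropUntil a ha).support
  · have hseg : ((p.dropUntil a ha).takeUntil b hb').IsPath :=
      (hp.dropUntil ha).takeUntil hb'
    have heq : q = (p.dropUntil a ha).takeUntil b hb' :=
      (hT.existsUnique_path a b).unique hq hseg
    exact ⟨_, aux_seg_infix p ha hb', by simp [heq]⟩
  · have hbt : b ∈ (p.takeUntil a ha).support := by
      have h := hb
      rw [← SimpleGraph.Walk.take_spec p ha, SimpleGraph.Walk.mem_support_append_iff] at h
      rcases h with h | h
      · exact h
      · exact absurd h hb'
    have haa : a ∈ ((p.takeUntil a ha).dropUntil b hbt).support :=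
      SimpleGraph.Walk.end_mem_support _
    have hseg : (((p.takeUntil a ha).dropUntil b hbt).takeUntil a haa).IsPath :=
      ((hp.takeUntil ha).dropUntil hbt).takeUntil haa
    have hqe : q.reverse = ((p.takeUntil a ha).dropUntil b hbt).takeUntil a haa :=
      (hT.existsUnique_path b a).unique hq.reverse hseg
    have hinf := aux_seg_infix (p.takeUntil a ha) hbt haa
    have hpre := aux_take_prefix p ha
    refine ⟨_, hinf.trans hpre.isInfix, fun x => ?_⟩
    rw [← hqe]
    simp [SimpleGraph.Walk.support_reverse]

lemma aux_char {W : Type*} [DecidableEq W] {L A l B : List W} (hL : L.Nodup)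
    (hsplit : A ++ l ++ B = L) (v : W) :
    v ∈ l ↔ v ∈ L ∧ A.length ≤ L.idxOf v ∧ L.idxOf v < A.length + l.length := by
  have hL' : (A ++ (l ++ B)).Nodup := by rwa [← List.append_assoc, hsplit]
  rw [List.nodup_append] at hL'
  obtain ⟨hA, hlB, hdisj⟩ := hL'
  rw [List.nodup_append] at hlB
  obtain ⟨hl, hB, hdisj2⟩ := hlB
  constructor
  · intro hv
    have hvL : v ∈ L := by rw [← hsplit]; simp [hv]
    have hvA : v ∉ A := fun h => hdisj v h v (by simp [hv]) rfl
    have hidx : L.idxOf v = A.length + l.idxOf v := by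
      rw [← hsplit, List.append_assoc, List.idxOf_append_of_notMem hvA,
        List.idxOf_append_of_mem hv]
    refine ⟨hvL, by omega, ?_⟩
    have := List.idxOf_lt_length_iff.2 hv
    omega
  · rintro ⟨hvL, h1, h2⟩
    have hv : v ∈ A ∨ v ∈ l ∨ v ∈ B := by
      rw [← hsplit] at hvL; simpa using hvL
    rcases hv with hv | hv | hv
    · exfalso
      have : L.idxOf v = A.idxOf v := by
        rw [← hsplit, List.append_assoc, List.idxOf_append_of_mem hv]
      have := List.idxOf_lt_length_iff.2 hv
      omega
    · exact hv
    · exfalso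
      have hvA : v ∉ A := fun h => hdisj v h v (by simp [hv]) rfl
      have hvl : v ∉ l := fun h => hdisj2 v h v hv rfl
      have : L.idxOf v = A.length + (l.length + B.idxOf v) := by
        rw [← hsplit, List.append_assoc, List.idxOf_append_of_notMem hvA,
          List.idxOf_append_of_notMem hvl]
      omega

end Aux

theorem stmt_18 {α : Type*} [PartialOrder α] {V : Type*}
    (T : SimpleGraph V) (hT : T.IsTree) (W : α → Set V)
    (hpath : ∀ x, IsVertexPath T (W x))
    (hrep : ∀ x y, x < y ↔ W x ⊂ W y) (z : α) :
    HasCIRep (fun a b : {x : α // x ≤ z} => a.1 < b.1) := by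
  classical
  obtain ⟨u, v, p, hp, hWz⟩ := hpath z
  set L := p.support with hL
  have hnd : L.Nodup := hp.support_nodup
  have key : ∀ x : {x : α // x ≤ z}, ∃ i len : ℕ, 0 < len ∧ i + len ≤ L.length ∧
      (∀ w, w ∈ W x.1 ↔ w ∈ L ∧ i ≤ L.idxOf w ∧ L.idxOf w < i + len) := by
    intro x
    obtain ⟨a, b, q, hq, hWx⟩ := hpath x.1
    have hsub : W x.1 ⊆ W z := by
      rcases lt_or_eq_of_le x.2 with h | h
      · exact ((hrep _ _).1 h).subset
      · rw [h]
    have ha : a ∈ p.support := by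
      have h1 : a ∈ W x.1 := by rw [hWx]; exact q.start_mem_support
      have h2 := hsub h1; rwa [hWz] at h2
    have hb : b ∈ p.support := by
      have h1 : b ∈ W x.1 := by rw [hWx]; exact q.end_mem_support
      have h2 := hsub h1; rwa [hWz] at h2
    obtain ⟨l, hinf, hmem⟩ := aux_seg hT p hp ha hb q hq
    obtain ⟨A, B, hsplit⟩ := hinf
    refine ⟨A.length, l.length, ?_, ?_, fun w => ?_⟩
    · have hal : a ∈ l := (hmem a).1 q.start_mem_support
      exact List.length_pos_iff.2 (List.ne_nil_of_mem hal)
    · have : (A ++ l ++ B).length = L.length := by rw [hsplit]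
      simp at this; omega
    · rw [hWx]
      show w ∈ q.support ↔ _
      rw [hmem w]
      exact aux_char hnd hsplit w
  choose i len hlen hle hchar using key
  have hWiff : ∀ x y : {x : α // x ≤ z}, W x.1 ⊆ W y.1 ↔
      (i y ≤ i x ∧ i x + len x - 1 ≤ i y + len y - 1) := by
    intro x y
    constructor
    · intro hss
      have hbnd : ∀ k, i x ≤ k → k < i x + len x → (i y ≤ k ∧ k < i y + len y) := by
        intro k hk1 hk2
        have hkL : k < L.length := by have := hle x; omega
        have hwmem : L[k] ∈ L := List.getElem_mem hkL
        have hidx : L.idxOf L[k] = k := by have := List.get_idxOf hnd ⟨k, hkL⟩; exact this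
        have hwx : L[k] ∈ W x.1 := (hchar x L[k]).2 ⟨hwmem, by omega, by omega⟩
        have hwy := (hchar y L[k]).1 (hss hwx)
        omega
      have h1 := hbnd (i x) (le_refl _) (by have := hlen x; omega)
      have h2 := hbnd (i x + len x - 1) (by have := hlen x; omega) (by have := hlen x; omega)
      have := hlen x; have := hlen y
      omega
    · rintro ⟨h1, h2⟩ w hw
      have hc := (hchar x w).1 hw
      refine (hchar y w).2 ⟨hc.1, by omega, ?_⟩
      have := hlen x; have := hlen y
      omega
  have hdle : ∀ x : {x : α // x ≤ z}, ((i x : ℝ)) ≤ ((i x + len x - 1 : ℕ) : ℝ) := by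
    intro x
    have := hlen x
    exact_mod_cast Nat.le_sub_one_of_lt (by omega)
  have hIcc : ∀ x y : {x : α // x ≤ z}, (W x.1 ⊆ W y.1) ↔
      Set.Icc ((i x : ℝ)) ((i x + len x - 1 : ℕ) : ℝ) ⊆
        Set.Icc ((i y : ℝ)) ((i y + len y - 1 : ℕ) : ℝ) := by
    intro x y
    rw [hWiff, Set.Icc_subset_Icc_iff (hdle x)]
    constructor
    · rintro ⟨h1, h2⟩
      exact ⟨by exact_mod_cast h1, by exact_mod_cast h2⟩
    · rintro ⟨h1, h2⟩
      exact ⟨by exact_mod_cast h1, by exact_mod_cast h2⟩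
  refine ⟨fun x => (i x : ℝ), fun x => ((i x + len x - 1 : ℕ) : ℝ), hdle, fun x y => ?_⟩
  show x.1 < y.1 ↔ _
  rw [hrep x.1 y.1, ssubset_iff_subset_not_subset, ssubset_iff_subset_not_subset,
    hIcc x y, hIcc y x]
end

section
/- If P is a finite poset such that both P and its dual P^d admit CPT representations (P is dually-CPT), then for every element z the induced subposets on the closed down-set D[z] and on the closed up-set U[z] are both CI posets. -/
/-- A containment representation by paths in a tree. -/
def HasCPTRep {α : Type*} (lt : α → α → Prop) : Prop :=
  ∃ (V : Type) (T : SimpleGraph V), T.IsTree ∧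
    ∃ W : α → Set V, (∀ x, IsVertexPath T (W x)) ∧ ∀ x y, lt x y ↔ W x ⊂ W y

open SimpleGraph


lemma getelem_mid {V : Type*} (pre s post : List V) (j : ℕ) (hj : j < s.length)
    (hlen : pre.length + j < (pre ++ s ++ post).length) :
    (pre ++ s ++ post)[pre.length + j] = s[j] := by
  rw [List.getElem_append_left (by simp; omega), List.getElem_append_right (by omega)]
  congr 1; omega

/-- An infix of a list, as a set, is the image of an index interval. -/
lemma infix_set_eq {V : Type*} (l s pre post : List V) (d : V)
    (h : l = pre ++ s ++ post) :
    {x | x ∈ s} = (fun i => l.getD i d) '' Set.Ico pre.length (pre.length + s.length) := by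
  ext v
  simp only [Set.mem_setOf_eq, Set.mem_image, Set.mem_Ico]
  constructor
  · intro hv
    obtain ⟨j, hj, hget⟩ := List.mem_iff_getElem.1 hv
    refine ⟨pre.length + j, ⟨Nat.le_add_right _ _, by omega⟩, ?_⟩
    have hlen : pre.length + j < l.length := by
      subst h; simp only [List.length_append]; omega
    rw [List.getD_eq_getElem l d hlen, ← hget]
    subst h; exact getelem_mid pre s post j hj hlen
  · rintro ⟨i, ⟨hi1, hi2⟩, hget⟩
    have hlen : i < l.length := by
      subst h; simp only [List.length_append]; omega
    rw [List.getD_eq_getElem l d hlen] at hget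
    subst h
    obtain ⟨j, rfl⟩ := Nat.exists_eq_add_of_le hi1
    rw [getelem_mid pre s post j (by omega) hlen] at hget
    rw [← hget]; exact List.getElem_mem _


lemma support_concat {V : Type*} {T : SimpleGraph V} {x y : V} (w : T.Walk x y) :
    w.support = w.reverse.support.tail.reverse ++ [y] := by
  have h1 := w.reverse.support_eq_cons
  rw [Walk.support_reverse] at h1
  have := congrArg List.reverse h1
  rw [List.reverse_reverse] at this
  rw [this]; simp

/-- A path whose support lies inside the support of another path in a tree
is (up to reversal) an infix of it. -/
lemma path_infix {V : Type*} {T : SimpleGraph V} (hT : T.IsTree) {u v a b : V}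
    (p : T.Walk u v) (hp : p.IsPath) (q : T.Walk a b) (hq : q.IsPath)
    (hsub : ∀ x, x ∈ q.support → x ∈ p.support) :
    ∃ pre post : List V, p.support = pre ++ q.support ++ post ∨
      p.support = pre ++ q.support.reverse ++ post := by
  classical
  have ha : a ∈ p.support := hsub a q.start_mem_support
  have hb : b ∈ p.support := hsub b q.end_mem_support
  set tk := p.takeUntil a ha with htk
  set dr := p.dropUntil a ha with hdr
  have hps : p.support = tk.support ++ dr.support.tail := by
    conv_lhs => rw [← p.take_spec ha]
    exact Walk.support_append _ _
  have hbcases : b ∈ tk.support ∨ b ∈ dr.support := by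
    rw [hps] at hb
    rcases List.mem_append.1 hb with h | h
    · exact Or.inl h
    · exact Or.inr (List.mem_of_mem_tail h)
  rcases hbcases with hbt | hbd
  · -- b occurs before a : q.reverse is the segment from b to a inside tk
    set seg := tk.dropUntil b hbt with hseg
    have hsegpath : seg.IsPath := (hp.takeUntil ha).dropUntil hbt
    have hqeq : q.reverse = seg :=
      (hT.existsUnique_path b a).unique hq.reverse hsegpath
    refine ⟨(tk.takeUntil b hbt).reverse.support.tail.reverse, dr.support.tail, Or.inr ?_⟩
    rw [hps, ← Walk.support_reverse q, hqeq]
    have htksup : tk.support = (tk.takeUntil b hbt).support ++ seg.support.tail := by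
      conv_lhs => rw [← tk.take_spec hbt]
      exact Walk.support_append _ _
    rw [htksup, support_concat (tk.takeUntil b hbt)]
    have : seg.support = b :: seg.support.tail := seg.support_eq_cons
    rw [List.append_assoc, List.append_assoc, List.append_assoc]
    congr 1
    rw [this]; simp; rw [← List.cons_append, ← this]
  · -- b occurs after a : q is the segment from a to b inside dr
    set seg := dr.takeUntil b hbd with hseg
    have hsegpath : seg.IsPath := (hp.dropUntil ha).takeUntil hbd
    have hqeq : q = seg := (hT.existsUnique_path a b).unique hq hsegpath
    refine ⟨tk.reverse.support.tail.reverse, (dr.dropUntil b hbd).support.tail, Or.inl ?_⟩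
    rw [hps, hqeq]
    have hdrsup : dr.support = seg.support ++ (dr.dropUntil b hbd).support.tail := by
      conv_lhs => rw [← dr.take_spec hbd]
      exact Walk.support_append _ _
    rw [support_concat tk, hdrsup]
    have hseg2 : seg.support = a :: seg.support.tail := seg.support_eq_cons
    rw [hseg2]
    simp only [List.append_assoc, List.cons_append, List.singleton_append, List.tail_cons, List.nil_append]

/-- nat index intervals versus real closed intervals -/
lemma ico_vs_icc (n k n' k' : ℕ) (hk : 1 ≤ k) (hk' : 1 ≤ k') :
    (Set.Ico n (n + k) ⊂ Set.Ico n' (n' + k')) ↔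
      (Set.Icc (n : ℝ) (n + k - 1) ⊂ Set.Icc (n' : ℝ) (n' + k' - 1)) := by
  rw [Set.ssubset_def, Set.ssubset_def,
    Set.Ico_subset_Ico_iff (by omega), Set.Ico_subset_Ico_iff (by omega),
    Set.Icc_subset_Icc_iff (by have h1 : (1:ℝ) ≤ (k:ℝ) := Nat.one_le_cast.mpr hk; linarith),
    Set.Icc_subset_Icc_iff (by have h1 : (1:ℝ) ≤ (k':ℝ) := Nat.one_le_cast.mpr hk'; linarith)]
  have cast_iff : ∀ a b c d : ℕ, ((a:ℝ) + b - 1 ≤ c + d - 1 ↔ a + b ≤ c + d) := by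
    intro a b c d
    rw [sub_le_sub_iff_right]
    exact_mod_cast Iff.rfl
  constructor
  · rintro ⟨⟨h1, h2⟩, h3⟩
    refine ⟨⟨by exact_mod_cast h1, (cast_iff _ _ _ _).2 (by exact_mod_cast h2)⟩, fun ⟨a1, a2⟩ => ?_⟩
    exact h3 ⟨by exact_mod_cast a1, by exact_mod_cast (cast_iff _ _ _ _).1 a2⟩
  · rintro ⟨⟨h1, h2⟩, h3⟩
    refine ⟨⟨by exact_mod_cast h1, by exact_mod_cast (cast_iff _ _ _ _).1 h2⟩, fun ⟨a1, a2⟩ => ?_⟩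
    exact h3 ⟨by exact_mod_cast a1, (cast_iff _ _ _ _).2 (by exact_mod_cast a2)⟩

/-- From a CPT representation, the down-set of `z` (given by a predicate implying
`r · z` or equality) has a CI representation. -/
lemma ci_of_cpt {β : Type*} (r : β → β → Prop) (z : β) (hr : HasCPTRep r)
    (s : β → Prop) (hs : ∀ x, s x → r x z ∨ x = z) :
    HasCIRep (fun a b : {x // s x} => r a.1 b.1) := by
  obtain ⟨V, T, hT, W, hpath, hiff⟩ := hr
  obtain ⟨u, v, p, hp, hWz⟩ := hpath z
  have key : ∀ x : {x // s x}, ∃ n k : ℕ, 1 ≤ k ∧ n + k ≤ p.support.length ∧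
      W x.1 = (fun i => p.support.getD i u) '' Set.Ico n (n + k) := by
    rintro ⟨x, hx⟩
    obtain ⟨a, b, q, hq, hWx⟩ := hpath x
    have hWsub : W x ⊆ W z := by
      rcases hs x hx with h | rfl
      · exact ((hiff x z).1 h).subset
      · exact le_rfl
    have hsub : ∀ y, y ∈ q.support → y ∈ p.support := by
      intro y hy
      have : y ∈ W z := hWsub (hWx ▸ hy)
      rwa [hWz] at this
    obtain ⟨pre, post, hcase⟩ := path_infix hT p hp q hq hsub
    rcases hcase with h | h
    · refine ⟨pre.length, q.support.length, ?_, ?_, ?_⟩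
      · simpa using q.support_ne_nil.length_pos
      · rw [h]; simp [List.length_append]
      · rw [hWx, infix_set_eq p.support q.support pre post u h]
    · refine ⟨pre.length, q.support.length, ?_, ?_, ?_⟩
      · simpa using q.support_ne_nil.length_pos
      · rw [h]; simp [List.length_append]
      · have := infix_set_eq p.support q.support.reverse pre post u h
        rw [List.length_reverse] at this
        rw [hWx, ← this]
        ext y; simp
  choose n k hk hnk hW using key
  have hinj : Set.InjOn (fun i => p.support.getD i u) (Set.Iio p.support.length) := by
    intro i hi j hj hij
    simp only [Set.mem_Iio] at hi hj
    simp only [List.getD_eq_getElem _ _ hi, List.getD_eq_getElem _ _ hj] at hij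
    exact (hp.support_nodup.getElem_inj_iff).1 hij
  refine ⟨fun x => (n x : ℝ), fun x => (n x : ℝ) + (k x) - 1,
    fun x => by
      show (n x : ℝ) ≤ (n x : ℝ) + (k x) - 1
      have : (1:ℝ) ≤ ((k x):ℝ) := by exact_mod_cast hk x
      linarith,
    fun x y => ?_⟩
  show r x.1 y.1 ↔ Set.Icc ((n x : ℝ)) ((n x : ℝ) + (k x) - 1) ⊂
    Set.Icc ((n y : ℝ)) ((n y : ℝ) + (k y) - 1)
  rw [hiff, hW x, hW y]
  have hsubx : Set.Ico (n x) (n x + k x) ⊆ Set.Iio p.support.length := fun i hi => by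
    simp only [Set.mem_Ico] at hi; exact Set.mem_Iio.2 (by have := hnk x; omega)
  have hsuby : Set.Ico (n y) (n y + k y) ⊆ Set.Iio p.support.length := fun i hi => by
    simp only [Set.mem_Ico] at hi; exact Set.mem_Iio.2 (by have := hnk y; omega)
  rw [Set.ssubset_def, hinj.image_subset_image_iff hsubx hsuby,
    hinj.image_subset_image_iff hsuby hsubx, ← Set.ssubset_def,
    ico_vs_icc _ _ _ _ (hk x) (hk y)]

/-- CI representations dualize (for finite types). -/
lemma ci_flip {γ : Type*} [Finite γ] (r : γ → γ → Prop) (h : HasCIRep r) :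
    HasCIRep (fun a b => r b a) := by
  obtain ⟨lo, hi, hle, hiff⟩ := h
  obtain ⟨C, hC⟩ := (Set.finite_range fun x => hi x - lo x).bddAbove
  have hC' : ∀ x, hi x - lo x ≤ C := fun x => hC ⟨x, rfl⟩
  refine ⟨fun x => -(lo x), fun x => C - hi x,
    fun x => by show -(lo x) ≤ C - hi x; linarith [hle x, hC' x],
    fun x y => ?_⟩
  show r y x ↔ Set.Icc (-(lo x)) (C - hi x) ⊂ Set.Icc (-(lo y)) (C - hi y)
  rw [hiff y x, Set.ssubset_def, Set.ssubset_def,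
    Set.Icc_subset_Icc_iff (hle y), Set.Icc_subset_Icc_iff (hle x),
    Set.Icc_subset_Icc_iff (by linarith [hle x, hC' x]),
    Set.Icc_subset_Icc_iff (by linarith [hle y, hC' y])]
  constructor
  · rintro ⟨⟨h1, h2⟩, h3⟩
    exact ⟨⟨by linarith, by linarith⟩, fun ⟨a1, a2⟩ => h3 ⟨by linarith, by linarith⟩⟩
  · rintro ⟨⟨h1, h2⟩, h3⟩
    exact ⟨⟨by linarith, by linarith⟩, fun ⟨a1, a2⟩ => h3 ⟨by linarith, by linarith⟩⟩

theorem stmt_19 {α : Type*} [PartialOrder α] [Fintype α]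
    (hP : HasCPTRep (· < · : α → α → Prop))
    (hPd : HasCPTRep (fun a b : α => b < a)) (z : α) :
    HasCIRep (fun a b : {x : α // x ≤ z} => a.1 < b.1) ∧
      HasCIRep (fun a b : {x : α // z ≤ x} => a.1 < b.1) := by
  constructor
  · exact ci_of_cpt (· < ·) z hP (fun x => x ≤ z) (fun x hx => hx.lt_or_eq)
  · have h := ci_of_cpt (fun a b : α => b < a) z hPd (fun x => z ≤ x)
      (fun x hx => (hx.lt_or_eq).imp id Eq.symm)
    exact ci_flip _ h
end
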